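/- For the Kodaira-Thurston Lie algebra complex Λ(a,b,ā,b̄) with differential determined by ∂b = (1/2i)ab, ∂̄b = (1/2i)(ab̄ - bā), μ̄b = (1/2i)āb̄ (all other generators closed, plus conjugate equations), the Dolbeault cohomology dimensions are h^{0,0} = 1, h^{1,0} = 1, h^{2,0} = 0, h^{0,1} = 2, h^{1,1} = 4, h^{2,1} = 2, h^{0,2} = 0, h^{1,2} = 1, h^{2,2} = 1. -/

import Mathlib

/-- The free graded-commutative algebra `Λ(a,b,ā,b̄)` modelled as the exterior algebra on
four generators `a = g 0, b = g 1, ā = g 2, b̄ = g 3` of bidegrees `(1,0),(1,0),(0,1),(0,1)`. -/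
abbrev KTAlg : Type := ExteriorAlgebra ℂ (Fin 4 → ℂ)

noncomputable def gKT (i : Fin 4) : KTAlg :=
  ExteriorAlgebra.ι ℂ (Pi.single i 1)

/-- The bigraded pieces `A^{p,q}` of `Λ(a,b,ā,b̄)`. -/
noncomputable def AKT (p q : ℤ) : Submodule ℂ KTAlg :=
  if p = 0 ∧ q = 0 then Submodule.span ℂ {1}
  else if p = 1 ∧ q = 0 then Submodule.span ℂ {gKT 0, gKT 1}
  else if p = 0 ∧ q = 1 then Submodule.span ℂ {gKT 2, gKT 3}
  else if p = 2 ∧ q = 0 then Submodule.span ℂ {gKT 0 * gKT 1}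
  else if p = 1 ∧ q = 1 then
    Submodule.span ℂ {gKT 0 * gKT 2, gKT 0 * gKT 3, gKT 1 * gKT 2, gKT 1 * gKT 3}
  else if p = 0 ∧ q = 2 then Submodule.span ℂ {gKT 2 * gKT 3}
  else if p = 2 ∧ q = 1 then
    Submodule.span ℂ {gKT 0 * gKT 1 * gKT 2, gKT 0 * gKT 1 * gKT 3}
  else if p = 1 ∧ q = 2 then
    Submodule.span ℂ {gKT 0 * gKT 2 * gKT 3, gKT 1 * gKT 2 * gKT 3}
  else if p = 2 ∧ q = 2 then Submodule.span ℂ {gKT 0 * gKT 1 * gKT 2 * gKT 3}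
  else ⊥

/-- Dolbeault cocycles: `ω ∈ A^{p,q} ∩ Ker μ̄` with `∂̄ω ∈ μ̄(A^{p+1,q-1})`. -/
noncomputable def ZKT (mub delb : KTAlg →ₗ[ℂ] KTAlg) (p q : ℤ) : Submodule ℂ KTAlg :=
  AKT p q ⊓ LinearMap.ker mub ⊓ Submodule.comap delb ((AKT (p + 1) (q - 1)).map mub)

/-- Dolbeault coboundaries: `μ̄α + ∂̄β` with `α ∈ A^{p+1,q-2}`, `β ∈ A^{p,q-1}`, `μ̄β = 0`. -/
noncomputable def BKT (mub delb : KTAlg →ₗ[ℂ] KTAlg) (p q : ℤ) : Submodule ℂ KTAlg :=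
  (AKT (p + 1) (q - 2)).map mub ⊔ ((AKT p (q - 1) ⊓ LinearMap.ker mub)).map delb

/-- Dolbeault numbers `h^{p,q} = dim H^q(H_μ̄^{p,*}, ∂̄)`. -/
noncomputable def hKT (mub delb : KTAlg →ₗ[ℂ] KTAlg) (p q : ℤ) : ℕ :=
  Module.finrank ℂ
    (↥(ZKT mub delb p q) ⧸
      Submodule.comap (ZKT mub delb p q).subtype (BKT mub delb p q))

open ExteriorAlgebra Submodule Module

/-! ### Auxiliary algebraic lemmas -/

lemma gsq (i : Fin 4) : gKT i * gKT i = 0 := ι_sq_zero _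
lemma gsq' (i : Fin 4) (x : KTAlg) : gKT i * (gKT i * x) = 0 := by
  rw [← mul_assoc, gsq, zero_mul]
lemma gswap (i j : Fin 4) : gKT j * gKT i = -(gKT i * gKT j) :=
  eq_neg_of_add_eq_zero_left (ι_add_mul_swap _ _)
lemma gswap' (i j : Fin 4) (x : KTAlg) :
    gKT j * (gKT i * x) = -(gKT i * (gKT j * x)) := by
  rw [← mul_assoc, gswap, ← mul_assoc, neg_mul]

lemma A00 : AKT 0 0 = Submodule.span ℂ {1} := by norm_num [AKT]
lemma A10 : AKT 1 0 = Submodule.span ℂ {gKT 0, gKT 1} := by norm_num [AKT]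
lemma A01 : AKT 0 1 = Submodule.span ℂ {gKT 2, gKT 3} := by norm_num [AKT]
lemma A20 : AKT 2 0 = Submodule.span ℂ {gKT 0 * gKT 1} := by norm_num [AKT]
lemma A11 : AKT 1 1 = Submodule.span ℂ
    {gKT 0 * gKT 2, gKT 0 * gKT 3, gKT 1 * gKT 2, gKT 1 * gKT 3} := by norm_num [AKT]
lemma A02 : AKT 0 2 = Submodule.span ℂ {gKT 2 * gKT 3} := by norm_num [AKT]
lemma A21 : AKT 2 1 = Submodule.span ℂ
    {gKT 0 * gKT 1 * gKT 2, gKT 0 * gKT 1 * gKT 3} := by norm_num [AKT]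
lemma A12 : AKT 1 2 = Submodule.span ℂ
    {gKT 0 * gKT 2 * gKT 3, gKT 1 * gKT 2 * gKT 3} := by norm_num [AKT]
lemma A22 : AKT 2 2 = Submodule.span ℂ {gKT 0 * gKT 1 * gKT 2 * gKT 3} := by norm_num [AKT]

/-! ### Evaluation functionals via alternating maps -/

noncomputable def phiKT (k : ℕ) (f : Fin k → Fin 4) : KTAlg →ₗ[ℂ] ℂ :=
  liftAlternating (Pi.single k
    ((Matrix.detRowAlternating).compLinearMap (LinearMap.funLeft ℂ ℂ f)))

noncomputable def monKT (k : ℕ) (v : Fin k → Fin 4) : KTAlg :=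
  ιMulti ℂ k (fun i => Pi.single (v i) 1)

lemma phiKT_monKT (k : ℕ) (f v : Fin k → Fin 4) :
    phiKT k f (monKT k v) =
      Matrix.det (Matrix.of fun i j => (Pi.single (v i) (1:ℂ) : Fin 4 → ℂ) (f j)) := by
  rw [phiKT, monKT, liftAlternating_apply_ιMulti, Pi.single_eq_same]; rfl

lemma mon1 (i : Fin 4) : gKT i = monKT 1 ![i] := by
  simp [monKT, ιMulti_apply, List.ofFn_succ, gKT, Matrix.vecTail, Function.comp]

lemma mon2 (i j : Fin 4) : gKT i * gKT j = monKT 2 ![i, j] := by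
  simp [monKT, ιMulti_apply, List.ofFn_succ, gKT, Matrix.vecTail, Function.comp]

lemma mon3 (i j k : Fin 4) : gKT i * gKT j * gKT k = monKT 3 ![i, j, k] := by
  simp [monKT, ιMulti_apply, List.ofFn_succ, gKT, Matrix.vecTail, Matrix.vecHead,
    Function.comp, mul_assoc]

lemma mon4 (i j k l : Fin 4) : gKT i * gKT j * gKT k * gKT l = monKT 4 ![i, j, k, l] := by
  simp [monKT, ιMulti_apply, List.ofFn_succ, gKT, Matrix.vecTail, Matrix.vecHead,
    Function.comp, mul_assoc]

lemma li_dual {n : ℕ} (v : Fin n → KTAlg) (φ : Fin n → (KTAlg →ₗ[ℂ] ℂ))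
    (h : ∀ i j, φ i (v j) = if i = j then 1 else 0) : LinearIndependent ℂ v := by
  rw [Fintype.linearIndependent_iff]
  intro g hg i
  have h2 := congrArg (φ i) hg
  simp only [map_sum, map_smul, h, smul_eq_mul, mul_ite, mul_one, mul_zero, map_zero,
    Finset.sum_ite_eq, Finset.mem_univ, if_true] at h2
  exact h2

lemma li01KT : LinearIndependent ℂ ![gKT 2, gKT 3] := by
  apply li_dual _ ![phiKT 1 ![2], phiKT 1 ![3]]
  intro i j
  fin_cases i <;> fin_cases j <;>
    simp [mon1, phiKT_monKT, Matrix.det_fin_one, Pi.single_apply]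

lemma li11KT : LinearIndependent ℂ
    ![gKT 0 * gKT 2, gKT 0 * gKT 3, gKT 1 * gKT 2, gKT 1 * gKT 3] := by
  apply li_dual _ ![phiKT 2 ![0,2], phiKT 2 ![0,3], phiKT 2 ![1,2], phiKT 2 ![1,3]]
  intro i j
  fin_cases i <;> fin_cases j <;>
    simp [mon2, phiKT_monKT, Matrix.det_fin_two, Pi.single_apply]

lemma li21KT : LinearIndependent ℂ ![gKT 0 * gKT 1 * gKT 2, gKT 0 * gKT 1 * gKT 3] := by
  apply li_dual _ ![phiKT 3 ![0,1,2], phiKT 3 ![0,1,3]]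
  intro i j
  fin_cases i <;> fin_cases j <;>
    simp [mon3, phiKT_monKT, Matrix.det_fin_three, Pi.single_apply]

lemma li12KT : LinearIndependent ℂ ![gKT 0 * gKT 2 * gKT 3, gKT 1 * gKT 2 * gKT 3] := by
  apply li_dual _ ![phiKT 3 ![0,2,3], phiKT 3 ![1,2,3]]
  intro i j
  fin_cases i <;> fin_cases j <;>
    simp [mon3, phiKT_monKT, Matrix.det_fin_three, Pi.single_apply]

lemma nz0KT : gKT 0 ≠ 0 := by
  intro h
  have := congrArg (phiKT 1 ![0]) h
  rw [mon1, phiKT_monKT] at this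
  simp [Matrix.det_fin_one, Pi.single_apply] at this

lemma nz23KT : gKT 2 * gKT 3 ≠ 0 := by
  intro h
  have := congrArg (phiKT 2 ![2,3]) h
  rw [mon2, phiKT_monKT] at this
  simp [Matrix.det_fin_two, Pi.single_apply] at this

lemma nz023KT : gKT 0 * gKT 2 * gKT 3 ≠ 0 := by
  intro h
  have := congrArg (phiKT 3 ![0,2,3]) h
  rw [mon3, phiKT_monKT] at this
  simp [Matrix.det_fin_three, Pi.single_apply] at this

lemma nz0123KT : gKT 0 * gKT 1 * gKT 2 * gKT 3 ≠ 0 := by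
  intro h
  have := congrArg (phiKT 4 ![0,1,2,3]) h
  rw [mon4, phiKT_monKT] at this
  have h1 : (Matrix.of fun i j =>
      (Pi.single ((![0,1,2,3] : Fin 4 → Fin 4) i) (1:ℂ) : Fin 4 → ℂ)
        ((![0,1,2,3] : Fin 4 → Fin 4) j)) = (1 : Matrix (Fin 4) (Fin 4) ℂ) := by
    ext i j
    fin_cases i <;> fin_cases j <;> simp [Pi.single_apply, Matrix.one_apply]
  rw [h1, Matrix.det_one] at this
  simp at this

/-! ### finrank helpers -/

lemma span_pair_finrank {x y : KTAlg} (h : LinearIndependent ℂ ![x, y]) :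
    finrank ℂ (span ℂ {x, y}) = 2 := by
  have he : ({x, y} : Set KTAlg) = Set.range ![x, y] := by
    ext z; simp [Matrix.range_cons, Matrix.range_empty]; tauto
  rw [he, finrank_span_eq_card h]; simp

lemma span_quad_finrank {x y z w : KTAlg} (h : LinearIndependent ℂ ![x, y, z, w]) :
    finrank ℂ (span ℂ {x, y, z, w}) = 4 := by
  have he : ({x, y, z, w} : Set KTAlg) = Set.range ![x, y, z, w] := by
    ext u; simp [Matrix.range_cons, Matrix.range_empty]; tauto
  rw [he, finrank_span_eq_card h]; simp

lemma quot_rank_of_le (Z B : Submodule ℂ KTAlg) (h : Z ≤ B) :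
    finrank ℂ (↥Z ⧸ comap Z.subtype B) = 0 := by
  have ht : comap Z.subtype B = ⊤ := by
    rw [eq_top_iff]; rintro ⟨x, hx⟩ _; exact h hx
  haveI := (Submodule.Quotient.subsingleton_iff (p := comap Z.subtype B)).mpr ht
  exact finrank_zero_of_subsingleton

lemma quot_rank_of_bot (Z B : Submodule ℂ KTAlg) (h : B = ⊥) :
    finrank ℂ (↥Z ⧸ comap Z.subtype B) = finrank ℂ Z := by
  subst h
  have hb : comap Z.subtype (⊥ : Submodule ℂ KTAlg) = ⊥ := by
    rw [comap_bot, ker_subtype]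
  rw [hb]
  exact (Submodule.quotEquivOfEqBot _ rfl).finrank_eq

lemma quot_rank_of_sub (Z B : Submodule ℂ KTAlg) (h : B ≤ Z) [FiniteDimensional ℂ Z] :
    finrank ℂ (↥Z ⧸ comap Z.subtype B) + finrank ℂ B = finrank ℂ Z := by
  have e := Submodule.finrank_quotient_add_finrank (comap Z.subtype B)
  rwa [(Submodule.comapSubtypeEquivOfLe h).finrank_eq] at e

lemma Z_eq_A (mub delb : KTAlg →ₗ[ℂ] KTAlg) (p q : ℤ)
    (hker : AKT p q ≤ LinearMap.ker mub)
    (hcomap : AKT p q ≤ Submodule.comap delb ((AKT (p + 1) (q - 1)).map mub)) :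
    ZKT mub delb p q = AKT p q :=
  le_antisymm (inf_le_left.trans inf_le_left) (le_inf (le_inf le_rfl hker) hcomap)


set_option maxHeartbeats 1000000 in
/-- For the Kodaira-Thurston Lie algebra complex `Λ(a,b,ā,b̄)` (so `μ̄b = (1/2i)āb̄`,
`∂̄b = (1/2i)(ab̄ - bā)`, `∂̄b̄ = -(1/2i)āb̄`, and `a, ā` closed), the Dolbeault
cohomology has dimensions
`h^{0,0}=1, h^{1,0}=1, h^{2,0}=0, h^{0,1}=2, h^{1,1}=4, h^{2,1}=2, h^{0,2}=0,
h^{1,2}=1, h^{2,2}=1`. -/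
theorem stmt_15 (mub delb : KTAlg →ₗ[ℂ] KTAlg)
    (hmub_deriv : ∀ p q : ℤ, ∀ x ∈ AKT p q, ∀ y : KTAlg,
      mub (x * y) = mub x * y + ((-1 : ℂ) ^ (p + q)) • (x * mub y))
    (hdelb_deriv : ∀ p q : ℤ, ∀ x ∈ AKT p q, ∀ y : KTAlg,
      delb (x * y) = delb x * y + ((-1 : ℂ) ^ (p + q)) • (x * delb y))
    (hmub0 : mub (gKT 0) = 0)
    (hmub1 : mub (gKT 1) = (1 / (2 * Complex.I)) • (gKT 2 * gKT 3))
    (hmub2 : mub (gKT 2) = 0)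
    (hmub3 : mub (gKT 3) = 0)
    (hdelb0 : delb (gKT 0) = 0)
    (hdelb1 : delb (gKT 1) =
      (1 / (2 * Complex.I)) • (gKT 0 * gKT 3 - gKT 1 * gKT 2))
    (hdelb2 : delb (gKT 2) = 0)
    (hdelb3 : delb (gKT 3) = (-(1 / (2 * Complex.I))) • (gKT 2 * gKT 3)) :
    hKT mub delb 0 0 = 1 ∧ hKT mub delb 1 0 = 1 ∧ hKT mub delb 2 0 = 0 ∧
    hKT mub delb 0 1 = 2 ∧ hKT mub delb 1 1 = 4 ∧ hKT mub delb 2 1 = 2 ∧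
    hKT mub delb 0 2 = 0 ∧ hKT mub delb 1 2 = 1 ∧ hKT mub delb 2 2 = 1 := by
  set c : ℂ := 1 / (2 * Complex.I) with hcdef
  have hc : c ≠ 0 := by
    rw [hcdef]
    exact div_ne_zero one_ne_zero (mul_ne_zero two_ne_zero Complex.I_ne_zero)
  have hcu : IsUnit c := isUnit_iff_ne_zero.mpr hc
  have hcun : IsUnit (-c) := isUnit_iff_ne_zero.mpr (neg_ne_zero.mpr hc)
  have g0mem : gKT 0 ∈ AKT 1 0 := A10 ▸ subset_span (by simp)
  have g1mem : gKT 1 ∈ AKT 1 0 := A10 ▸ subset_span (by simp)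
  have g2mem : gKT 2 ∈ AKT 0 1 := A01 ▸ subset_span (by simp)
  have g01mem : gKT 0 * gKT 1 ∈ AKT 2 0 := A20 ▸ subset_span rfl
  have g02mem : gKT 0 * gKT 2 ∈ AKT 1 1 := A11 ▸ subset_span (by simp)
  have g12mem : gKT 1 * gKT 2 ∈ AKT 1 1 := A11 ▸ subset_span (by simp)
  have g012mem : gKT 0 * gKT 1 * gKT 2 ∈ AKT 2 1 := A21 ▸ subset_span (by simp)
  -- μ̄ values
  have m1 : mub 1 = 0 := by
    have h := hmub_deriv 0 0 1 (A00 ▸ subset_span rfl) 1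
    simp only [one_mul, mul_one, add_zero, zpow_zero, one_smul] at h
    exact add_eq_left.mp h.symm
  have m01 : mub (gKT 0 * gKT 1) = (-c) • (gKT 0 * gKT 2 * gKT 3) := by
    rw [hmub_deriv 1 0 _ g0mem, hmub0, hmub1]
    norm_num [smul_mul_assoc, mul_smul_comm, mul_assoc, gsq, gsq', mul_zero, zero_mul,
      smul_zero, mul_neg, neg_mul, smul_neg, neg_zero, neg_neg, sub_mul, mul_sub, smul_sub,
      gswap 2 3, gswap' 2 3]
  have m02 : mub (gKT 0 * gKT 2) = 0 := by
    rw [hmub_deriv 1 0 _ g0mem, hmub0, hmub2]; norm_num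
  have m03 : mub (gKT 0 * gKT 3) = 0 := by
    rw [hmub_deriv 1 0 _ g0mem, hmub0, hmub3]; norm_num
  have m12 : mub (gKT 1 * gKT 2) = 0 := by
    rw [hmub_deriv 1 0 _ g1mem, hmub1, hmub2]
    norm_num [smul_mul_assoc, mul_smul_comm, mul_assoc, gsq, gsq', mul_zero, zero_mul,
      smul_zero, mul_neg, neg_mul, smul_neg, neg_zero, neg_neg, sub_mul, mul_sub, smul_sub,
      gswap 2 3, gswap' 2 3]
  have m13 : mub (gKT 1 * gKT 3) = 0 := by
    rw [hmub_deriv 1 0 _ g1mem, hmub1, hmub3]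
    norm_num [smul_mul_assoc, mul_smul_comm, mul_assoc, gsq, gsq', mul_zero, zero_mul,
      smul_zero, mul_neg, neg_mul, smul_neg, neg_zero, neg_neg, sub_mul, mul_sub, smul_sub,
      gswap 2 3, gswap' 2 3]
  have m23 : mub (gKT 2 * gKT 3) = 0 := by
    rw [hmub_deriv 0 1 _ g2mem, hmub2, hmub3]; norm_num
  have m012 : mub (gKT 0 * gKT 1 * gKT 2) = 0 := by
    rw [hmub_deriv 2 0 _ g01mem, m01, hmub2]
    norm_num [smul_mul_assoc, mul_smul_comm, mul_assoc, gsq, gsq', mul_zero, zero_mul,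
      smul_zero, mul_neg, neg_mul, smul_neg, neg_zero, neg_neg, sub_mul, mul_sub, smul_sub,
      gswap 2 3, gswap' 2 3]
  have m013 : mub (gKT 0 * gKT 1 * gKT 3) = 0 := by
    rw [hmub_deriv 2 0 _ g01mem, m01, hmub3]
    norm_num [smul_mul_assoc, mul_smul_comm, mul_assoc, gsq, gsq', mul_zero, zero_mul,
      smul_zero, mul_neg, neg_mul, smul_neg, neg_zero, neg_neg, sub_mul, mul_sub, smul_sub,
      gswap 2 3, gswap' 2 3]
  have m023 : mub (gKT 0 * gKT 2 * gKT 3) = 0 := by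
    rw [hmub_deriv 1 1 _ g02mem, m02, hmub3]; norm_num
  have m123 : mub (gKT 1 * gKT 2 * gKT 3) = 0 := by
    rw [hmub_deriv 1 1 _ g12mem, m12, hmub3]; norm_num
  have m0123 : mub (gKT 0 * gKT 1 * gKT 2 * gKT 3) = 0 := by
    rw [hmub_deriv 2 1 _ g012mem, m012, hmub3]; norm_num
  -- ∂̄ values
  have d1 : delb 1 = 0 := by
    have h := hdelb_deriv 0 0 1 (A00 ▸ subset_span rfl) 1
    simp only [one_mul, mul_one, add_zero, zpow_zero, one_smul] at h
    exact add_eq_left.mp h.symm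
  have d01 : delb (gKT 0 * gKT 1) = c • (gKT 0 * gKT 1 * gKT 2) := by
    rw [hdelb_deriv 1 0 _ g0mem, hdelb0, hdelb1]
    norm_num [smul_mul_assoc, mul_smul_comm, mul_assoc, gsq, gsq', mul_zero, zero_mul,
      smul_zero, mul_neg, neg_mul, smul_neg, neg_zero, neg_neg, sub_mul, mul_sub, smul_sub,
      gswap 2 3, gswap' 2 3]
  have d02 : delb (gKT 0 * gKT 2) = 0 := by
    rw [hdelb_deriv 1 0 _ g0mem, hdelb0, hdelb2]; norm_num
  have d03 : delb (gKT 0 * gKT 3) = c • (gKT 0 * gKT 2 * gKT 3) := by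
    rw [hdelb_deriv 1 0 _ g0mem, hdelb0, hdelb3]
    norm_num [smul_mul_assoc, mul_smul_comm, mul_assoc, gsq, gsq', mul_zero, zero_mul,
      smul_zero, mul_neg, neg_mul, smul_neg, neg_zero, neg_neg, sub_mul, mul_sub, smul_sub,
      gswap 2 3, gswap' 2 3]
  have d12 : delb (gKT 1 * gKT 2) = (-c) • (gKT 0 * gKT 2 * gKT 3) := by
    rw [hdelb_deriv 1 0 _ g1mem, hdelb1, hdelb2]
    norm_num [smul_mul_assoc, mul_smul_comm, mul_assoc, gsq, gsq', mul_zero, zero_mul,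
      smul_zero, mul_neg, neg_mul, smul_neg, neg_zero, neg_neg, sub_mul, mul_sub, smul_sub,
      gswap 2 3, gswap' 2 3]
  have d13 : delb (gKT 1 * gKT 3) = 0 := by
    rw [hdelb_deriv 1 0 _ g1mem, hdelb1, hdelb3]
    norm_num [smul_mul_assoc, mul_smul_comm, mul_assoc, gsq, gsq', mul_zero, zero_mul,
      smul_zero, mul_neg, neg_mul, smul_neg, neg_zero, neg_neg, sub_mul, mul_sub, smul_sub,
      gswap 2 3, gswap' 2 3]
    try module
  have d23 : delb (gKT 2 * gKT 3) = 0 := by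
    rw [hdelb_deriv 0 1 _ g2mem, hdelb2, hdelb3]
    norm_num [smul_mul_assoc, mul_smul_comm, mul_assoc, gsq, gsq', mul_zero, zero_mul,
      smul_zero, mul_neg, neg_mul, smul_neg, neg_zero, neg_neg, sub_mul, mul_sub, smul_sub,
      gswap 2 3, gswap' 2 3]
  have d012 : delb (gKT 0 * gKT 1 * gKT 2) = 0 := by
    rw [hdelb_deriv 2 0 _ g01mem, d01, hdelb2]
    norm_num [smul_mul_assoc, mul_smul_comm, mul_assoc, gsq, gsq', mul_zero, zero_mul,
      smul_zero, mul_neg, neg_mul, smul_neg, neg_zero, neg_neg, sub_mul, mul_sub, smul_sub,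
      gswap 2 3, gswap' 2 3]
  have d013 : delb (gKT 0 * gKT 1 * gKT 3) = 0 := by
    rw [hdelb_deriv 2 0 _ g01mem, d01, hdelb3]
    norm_num [smul_mul_assoc, mul_smul_comm, mul_assoc, gsq, gsq', mul_zero, zero_mul,
      smul_zero, mul_neg, neg_mul, smul_neg, neg_zero, neg_neg, sub_mul, mul_sub, smul_sub,
      gswap 2 3, gswap' 2 3]
    try module
  have d023 : delb (gKT 0 * gKT 2 * gKT 3) = 0 := by
    rw [hdelb_deriv 1 1 _ g02mem, d02, hdelb3]
    norm_num [smul_mul_assoc, mul_smul_comm, mul_assoc, gsq, gsq', mul_zero, zero_mul,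
      smul_zero, mul_neg, neg_mul, smul_neg, neg_zero, neg_neg, sub_mul, mul_sub, smul_sub,
      gswap 2 3, gswap' 2 3]
  have d123 : delb (gKT 1 * gKT 2 * gKT 3) = 0 := by
    rw [hdelb_deriv 1 1 _ g12mem, d12, hdelb3]
    norm_num [smul_mul_assoc, mul_smul_comm, mul_assoc, gsq, gsq', mul_zero, zero_mul,
      smul_zero, mul_neg, neg_mul, smul_neg, neg_zero, neg_neg, sub_mul, mul_sub, smul_sub,
      gswap 2 3, gswap' 2 3]
  have d0123 : delb (gKT 0 * gKT 1 * gKT 2 * gKT 3) = 0 := by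
    rw [hdelb_deriv 2 1 _ g012mem, d012, hdelb3]
    norm_num [smul_mul_assoc, mul_smul_comm, mul_assoc, gsq, gsq', mul_zero, zero_mul,
      smul_zero, mul_neg, neg_mul, smul_neg, neg_zero, neg_neg, sub_mul, mul_sub, smul_sub,
      gswap 2 3, gswap' 2 3]
  -- image computations
  have hmapA10 : (AKT 1 0).map mub = span ℂ {gKT 2 * gKT 3} := by
    rw [A10, Submodule.map_span, Set.image_insert_eq, Set.image_singleton, hmub0, hmub1,
      Submodule.span_insert_zero]
    exact Submodule.span_singleton_smul_eq hcu _
  have hmapA20 : (AKT 2 0).map mub = span ℂ {gKT 0 * gKT 2 * gKT 3} := by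
    rw [A20, Submodule.map_span, Set.image_singleton, m01]
    exact Submodule.span_singleton_smul_eq hcun _
  have hA10ker : AKT 1 0 ⊓ LinearMap.ker mub = span ℂ {gKT 0} := by
    apply le_antisymm
    · rintro x ⟨hxA, hxk⟩
      rw [SetLike.mem_coe, A10, mem_span_pair] at hxA
      obtain ⟨α, β, rfl⟩ := hxA
      rw [SetLike.mem_coe, LinearMap.mem_ker, map_add, map_smul, map_smul, hmub0, hmub1, smul_zero,
        zero_add, smul_smul] at hxk
      have hβ : β = 0 := by
        rcases smul_eq_zero.mp hxk with h | h
        · rcases mul_eq_zero.mp h with h' | h'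
          · exact h'
          · exact absurd h' hc
        · exact absurd h nz23KT
      rw [hβ, zero_smul, add_zero]
      exact smul_mem _ _ (mem_span_singleton_self _)
    · rw [span_le, Set.singleton_subset_iff]
      exact ⟨g0mem, LinearMap.mem_ker.mpr hmub0⟩
  have hA20ker : AKT 2 0 ⊓ LinearMap.ker mub = ⊥ := by
    rw [eq_bot_iff]
    rintro x ⟨hxA, hxk⟩
    rw [SetLike.mem_coe, A20, mem_span_singleton] at hxA
    obtain ⟨α, rfl⟩ := hxA
    rw [SetLike.mem_coe, LinearMap.mem_ker, map_smul, m01, smul_smul] at hxk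
    rcases smul_eq_zero.mp hxk with h | h
    · rcases mul_eq_zero.mp h with h' | h'
      · rw [h', zero_smul]; exact zero_mem _
      · exact absurd h' (neg_ne_zero.mpr hc)
    · exact absurd h nz023KT
  have hkerA11 : AKT 1 1 ≤ LinearMap.ker mub := by
    rw [A11, span_le]
    rintro x (rfl | rfl | rfl | rfl) <;>
      simp [LinearMap.mem_ker, m02, m03, m12, m13]
  -- Z computations
  have hZ00 : ZKT mub delb 0 0 = span ℂ {1} := by
    unfold ZKT
    apply le_antisymm ((inf_le_left.trans inf_le_left).trans A00.le)
    rw [span_le, Set.singleton_subset_iff]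
    refine ⟨⟨A00 ▸ subset_span rfl, LinearMap.mem_ker.mpr m1⟩, mem_comap.mpr ?_⟩
    rw [d1]; exact zero_mem _
  have hZ10 : ZKT mub delb 1 0 = span ℂ {gKT 0} := by
    unfold ZKT
    rw [hA10ker]
    apply inf_eq_left.mpr
    rw [span_le, Set.singleton_subset_iff]
    refine mem_comap.mpr ?_
    rw [hdelb0]; exact zero_mem _
  have hZ20 : ZKT mub delb 2 0 = ⊥ :=
    le_bot_iff.mp (by unfold ZKT; exact inf_le_left.trans hA20ker.le)
  have hZ01 : ZKT mub delb 0 1 = AKT 0 1 := by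
    apply Z_eq_A
    · rw [A01, span_le]
      rintro x (rfl | rfl) <;> simp [LinearMap.mem_ker, hmub2, hmub3]
    · have e : (AKT (0 + 1) (1 - 1)).map mub = span ℂ {gKT 2 * gKT 3} := by
        simp only [Int.reduceAdd, Int.reduceSub]; exact hmapA10
      rw [A01, span_le]
      rintro x (rfl | rfl) <;> refine mem_comap.mpr ?_
      · rw [hdelb2]; exact zero_mem _
      · rw [hdelb3, e]; exact smul_mem _ _ (mem_span_singleton_self _)
  have hZ11 : ZKT mub delb 1 1 = AKT 1 1 := by
    apply Z_eq_A _ _ _ _ hkerA11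
    have e : (AKT (1 + 1) (1 - 1)).map mub = span ℂ {gKT 0 * gKT 2 * gKT 3} := by
      simp only [Int.reduceAdd, Int.reduceSub]; exact hmapA20
    rw [A11, span_le]
    rintro x (rfl | rfl | rfl | rfl) <;> refine mem_comap.mpr ?_
    · rw [d02]; exact zero_mem _
    · rw [d03, e]; exact smul_mem _ _ (mem_span_singleton_self _)
    · rw [d12, e]; exact smul_mem _ _ (mem_span_singleton_self _)
    · rw [d13]; exact zero_mem _
  have hZ21 : ZKT mub delb 2 1 = AKT 2 1 := by
    apply Z_eq_A
    · rw [A21, span_le]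
      rintro x (rfl | rfl) <;> simp [LinearMap.mem_ker, m012, m013]
    · rw [A21, span_le]
      rintro x (rfl | rfl) <;> refine mem_comap.mpr ?_
      · rw [d012]; exact zero_mem _
      · rw [d013]; exact zero_mem _
  have hZ02 : ZKT mub delb 0 2 = AKT 0 2 := by
    apply Z_eq_A
    · rw [A02, span_le, Set.singleton_subset_iff]
      exact LinearMap.mem_ker.mpr m23
    · rw [A02, span_le, Set.singleton_subset_iff]
      refine mem_comap.mpr ?_
      rw [d23]; exact zero_mem _
  have hZ12 : ZKT mub delb 1 2 = AKT 1 2 := by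
    apply Z_eq_A
    · rw [A12, span_le]
      rintro x (rfl | rfl) <;> simp [LinearMap.mem_ker, m023, m123]
    · rw [A12, span_le]
      rintro x (rfl | rfl) <;> refine mem_comap.mpr ?_
      · rw [d023]; exact zero_mem _
      · rw [d123]; exact zero_mem _
  have hZ22 : ZKT mub delb 2 2 = AKT 2 2 := by
    apply Z_eq_A
    · rw [A22, span_le, Set.singleton_subset_iff]
      exact LinearMap.mem_ker.mpr m0123
    · rw [A22, span_le, Set.singleton_subset_iff]
      refine mem_comap.mpr ?_
      rw [d0123]; exact zero_mem _
  -- B computations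
  have hB00 : BKT mub delb 0 0 = ⊥ := by
    unfold BKT
    rw [show AKT (0 + 1) (0 - 2) = ⊥ by norm_num [AKT],
      show AKT 0 (0 - 1) = ⊥ by norm_num [AKT]]
    simp
  have hB10 : BKT mub delb 1 0 = ⊥ := by
    unfold BKT
    rw [show AKT (1 + 1) (0 - 2) = ⊥ by norm_num [AKT],
      show AKT 1 (0 - 1) = ⊥ by norm_num [AKT]]
    simp
  have hB01 : BKT mub delb 0 1 = ⊥ := by
    unfold BKT
    rw [show AKT (0 + 1) (1 - 2) = ⊥ by norm_num [AKT], Submodule.map_bot, bot_sup_eq]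
    refine le_bot_iff.mp ((map_mono inf_le_left).trans ?_)
    rw [show AKT 0 (1 - 1) = span ℂ {1} by norm_num [AKT], Submodule.map_span,
      Set.image_singleton, d1, Submodule.span_zero_singleton]
  have hB11 : BKT mub delb 1 1 = ⊥ := by
    unfold BKT
    rw [show AKT (1 + 1) (1 - 2) = ⊥ by norm_num [AKT], Submodule.map_bot, bot_sup_eq]
    refine le_bot_iff.mp ?_
    have e : AKT 1 (1 - 1) ⊓ LinearMap.ker mub = span ℂ {gKT 0} := by
      simp only [Int.reduceSub]; exact hA10ker
    rw [e, Submodule.map_span, Set.image_singleton, hdelb0, Submodule.span_zero_singleton]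
  have hB21 : BKT mub delb 2 1 = ⊥ := by
    unfold BKT
    rw [show AKT (2 + 1) (1 - 2) = ⊥ by norm_num [AKT], Submodule.map_bot, bot_sup_eq]
    have e : AKT 2 (1 - 1) ⊓ LinearMap.ker mub = ⊥ := by
      simp only [Int.reduceSub]; exact hA20ker
    rw [e, Submodule.map_bot]
  have hB22 : BKT mub delb 2 2 = ⊥ := by
    unfold BKT
    rw [show AKT (2 + 1) (2 - 2) = ⊥ by norm_num [AKT], Submodule.map_bot, bot_sup_eq]
    refine le_bot_iff.mp ((map_mono inf_le_left).trans ?_)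
    have e : AKT 2 (2 - 1) = AKT 2 1 := by norm_num
    rw [e, A21, Submodule.map_span, Set.image_insert_eq, Set.image_singleton, d012, d013]
    simp
  have hB12 : BKT mub delb 1 2 = span ℂ {gKT 0 * gKT 2 * gKT 3} := by
    unfold BKT
    have e1 : (AKT (1 + 1) (2 - 2)).map mub = span ℂ {gKT 0 * gKT 2 * gKT 3} := by
      simp only [Int.reduceAdd, Int.reduceSub]; exact hmapA20
    have e2 : AKT 1 (2 - 1) ⊓ LinearMap.ker mub = AKT 1 1 := by
      simp only [Int.reduceSub]; exact inf_eq_left.mpr hkerA11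
    have e3 : (AKT 1 1).map delb = span ℂ {gKT 0 * gKT 2 * gKT 3} := by
      rw [A11, Submodule.map_span, Set.image_insert_eq, Set.image_insert_eq,
        Set.image_insert_eq, Set.image_singleton, d02, d03, d12, d13]
      apply le_antisymm
      · rw [span_le]
        rintro x (rfl | rfl | rfl | rfl)
        · exact zero_mem _
        · exact smul_mem _ _ (mem_span_singleton_self _)
        · exact smul_mem _ _ (mem_span_singleton_self _)
        · exact zero_mem _
      · rw [span_le, Set.singleton_subset_iff]
        have h1 : c • (gKT 0 * gKT 2 * gKT 3) ∈
            span ℂ ({0, c • (gKT 0 * gKT 2 * gKT 3), -c • (gKT 0 * gKT 2 * gKT 3), 0} :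
              Set KTAlg) := subset_span (by simp)
        have h2 := smul_mem _ c⁻¹ h1
        rwa [smul_smul, inv_mul_cancel₀ hc, one_smul] at h2
    rw [e1, e2, e3, sup_idem]
  -- conclusion
  refine ⟨?_, ?_, ?_, ?_, ?_, ?_, ?_, ?_, ?_⟩
  · unfold hKT
    rw [quot_rank_of_bot _ _ hB00, hZ00]
    exact finrank_span_singleton one_ne_zero
  · unfold hKT
    rw [quot_rank_of_bot _ _ hB10, hZ10]
    exact finrank_span_singleton nz0KT
  · unfold hKT
    exact quot_rank_of_le _ _ (by rw [hZ20]; exact bot_le)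
  · unfold hKT
    rw [quot_rank_of_bot _ _ hB01, hZ01, A01]
    exact span_pair_finrank li01KT
  · unfold hKT
    rw [quot_rank_of_bot _ _ hB11, hZ11, A11]
    exact span_quad_finrank li11KT
  · unfold hKT
    rw [quot_rank_of_bot _ _ hB21, hZ21, A21]
    exact span_pair_finrank li21KT
  · unfold hKT
    refine quot_rank_of_le _ _ ?_
    rw [hZ02, A02]
    unfold BKT
    have e : (AKT (0 + 1) (2 - 2)).map mub = span ℂ {gKT 2 * gKT 3} := by
      simp only [Int.reduceAdd, Int.reduceSub]; exact hmapA10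
    rw [e]
    exact le_sup_left
  · haveI : FiniteDimensional ℂ ↥(ZKT mub delb 1 2) := by
      rw [hZ12, A12]
      exact FiniteDimensional.span_of_finite ℂ (Set.toFinite _)
    have hle : BKT mub delb 1 2 ≤ ZKT mub delb 1 2 := by
      rw [hB12, hZ12, A12]
      exact span_mono (by simp)
    have e := quot_rank_of_sub (ZKT mub delb 1 2) (BKT mub delb 1 2) hle
    have e2 : finrank ℂ ↥(ZKT mub delb 1 2) = 2 := by
      rw [hZ12, A12]; exact span_pair_finrank li12KT
    rw [hB12, finrank_span_singleton nz023KT, e2] at e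
    unfold hKT
    rw [hB12]
    linarith [e]
  · unfold hKT
    rw [quot_rank_of_bot _ _ hB22, hZ22, A22]
    exact finrank_span_singleton nz0123KT
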